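/- arXiv:2104.09552 — 2 statements merged into one kernel-verified Lean document; each statement's English description precedes it below -/
import Mathlib

section
/- Let E be a reproducing kernel Hilbert C*-module over a unital C*-algebra A on a set S with reproducing kernel K, and let s_0 ∈ S be such that K(s_0,s_0) is invertible in A. Then the map P(f) = k_{s_0}·⟨k_{s_0}, k_{s_0}⟩^{-1}·⟨k_{s_0}, f⟩ is the orthogonal projection of E onto the A-linear span k_{s_0}A, and the submodule E_0 = { f ∈ E : f(s_0) = 0 } equals (k_{s_0}A)^⊥; in particular E_0 is orthogonally complemented in E, with E = k_{s_0}A ⊕ E_0. -/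
open scoped RightActions

/-- The Hilbert C⋆-module class as it stood in Mathlib (December 2024): right `A`-module
structure via `Aᵐᵒᵖ`, inner product `A`-linear on the right. (Mathlib's `CStarModule` now
uses a left action `SMul A E` with `⟪x, a • y⟫ = a * ⟪x, y⟫`.) -/
class RightCStarModule (A E : Type*) [NonUnitalSemiring A] [StarRing A]
    [Module ℂ A] [AddCommGroup E] [Module ℂ E] [PartialOrder A] [SMul Aᵐᵒᵖ E] [Norm A] [Norm E]
    extends Inner A E where
  inner_add_right {x} {y} {z} : inner x (y + z) = inner x y + inner x z
  inner_self_nonneg {x} : 0 ≤ inner x x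
  inner_self {x} : inner x x = 0 ↔ x = 0
  inner_op_smul_right {a : A} {x y : E} : inner x (y <• a) = inner x y * a
  inner_smul_right_complex {z : ℂ} {x} {y} : inner x (z • y) = z • inner x y
  star_inner x y : star (inner x y) = inner y x
  norm_eq_sqrt_norm_inner_self x : ‖x‖ = √‖inner x x‖

/-- A *reproducing kernel Hilbert C*-module* (RKHC*M) over the C*-algebra `A` on the set `S`:
a Hilbert C*-module `E` over `A` realized (injectively) as a right `A`-submodule of the
`A`-valued functions on `S` via `toFun`, together with kernel elements `k s` such that
evaluation at `s` is given by `f ↦ ⟪k s, f⟫`, and such that the `A`-linear span of the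
`k s` is dense in `E`. -/
structure RKHCM (A : Type*) (S : Type*) (E : Type*)
    [CStarAlgebra A] [PartialOrder A] [StarOrderedRing A]
    [NormedAddCommGroup E] [NormedSpace ℂ E] [SMul Aᵐᵒᵖ E] [RightCStarModule A E] where
  toFun : E → S → A
  injective : Function.Injective toFun
  k : S → E
  eval_eq : ∀ (f : E) (s : S), toFun f s = inner A (k s) f
  dense_span : Dense
    ((Submodule.span ℂ (Set.range fun p : S × A => k p.1 <• p.2) : Submodule ℂ E) : Set E)

variable {A : Type*} [CStarAlgebra A] [PartialOrder A] [StarOrderedRing A]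
variable {S : Type*} [Nonempty S]
variable {E : Type*} [NormedAddCommGroup E] [NormedSpace ℂ E] [SMul Aᵐᵒᵖ E]
  [RightCStarModule A E] [CompleteSpace E]

theorem RightCStarModule.inner_op_smul_left' {a : A} {x y : E} :
    (inner A (x <• a) y : A) = star a * inner A x y := by
  rw [← RightCStarModule.star_inner y (x <• a), RightCStarModule.inner_op_smul_right, star_mul,
    RightCStarModule.star_inner]

theorem RightCStarModule.inner_sub_right' {x y z : E} :
    (inner A x (y - z) : A) = inner A x y - inner A x z := by
  have h := RightCStarModule.inner_add_right (A := A) (x := x) (y := y - z) (z := z)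
  rw [sub_add_cancel] at h
  rw [h, add_sub_cancel_right]

/-- if `K(s₀,s₀) = ⟪k s₀, k s₀⟫` is invertible, then
`P f = k s₀ <• (⟪k s₀, k s₀⟫⁻¹ * ⟪k s₀, f⟫)` is the orthogonal projection onto the
`A`-linear span `k s₀ • A` (it is idempotent, self-adjoint, has range inside `k s₀ • A`
and fixes it), the submodule `E₀ = {f | f(s₀) = 0}` equals the orthogonal complement
`(k s₀ • A)ᗮ`, and every `f` decomposes as `f = P f + (f - P f)` with `f - P f ∈ E₀`;
in particular `E = k s₀ • A ⊕ E₀`. -/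
theorem projection_onto_span_kernel_elt_and_orthogonal_complement
    (R : RKHCM A S E) (s₀ : S) (hs₀ : IsUnit (inner A (R.k s₀) (R.k s₀) : A))
    (P : E → E)
    (hP : ∀ f, P f =
      R.k s₀ <• (Ring.inverse (inner A (R.k s₀) (R.k s₀) : A) * inner A (R.k s₀) f)) :
    (∀ f, P (P f) = P f) ∧
    (∀ f g, (inner A (P f) g : A) = inner A f (P g)) ∧
    (∀ f, ∃ a : A, P f = R.k s₀ <• a) ∧
    (∀ a : A, P (R.k s₀ <• a) = R.k s₀ <• a) ∧
    ({f : E | R.toFun f s₀ = 0} =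
      {f : E | ∀ a : A, (inner A (R.k s₀ <• a) f : A) = 0}) ∧
    (∀ f : E, R.toFun (f - P f) s₀ = 0) := by
  set k := R.k s₀ with hk
  set K : A := inner A k k with hK
  set Ki : A := Ring.inverse K with hKi
  have hKiK : Ki * K = 1 := Ring.inverse_mul_cancel _ hs₀
  have hKKi : K * Ki = 1 := Ring.mul_inverse_cancel _ hs₀
  have hstarK : star K = K := by rw [hK, RightCStarModule.star_inner]
  have hstarKi : star Ki = Ki := by
    have h1 : K * star Ki = 1 := by
      have := congrArg star hKiK
      simpa [hstarK] using this
    calc star Ki = 1 * star Ki := by rw [one_mul]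
      _ = (Ki * K) * star Ki := by rw [hKiK]
      _ = Ki * (K * star Ki) := by rw [mul_assoc]
      _ = Ki := by rw [h1, mul_one]
  refine ⟨?_, ?_, ?_, ?_, ?_, ?_⟩
  · intro f
    rw [hP (P f), hP f, RightCStarModule.inner_op_smul_right]
    rw [← hK, ← mul_assoc, ← mul_assoc, hKiK, one_mul]
  · intro f g
    rw [hP f, hP g, RightCStarModule.inner_op_smul_left', RightCStarModule.inner_op_smul_right,
      star_mul, hstarKi, RightCStarModule.star_inner, mul_assoc]
  · intro f
    exact ⟨_, hP f⟩
  · intro a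
    rw [hP, RightCStarModule.inner_op_smul_right, ← hK, ← mul_assoc, hKiK, one_mul]
  · ext f
    simp only [Set.mem_setOf_eq, R.eval_eq, RightCStarModule.inner_op_smul_left', ← hk]
    constructor
    · intro h a; rw [h, mul_zero]
    · intro h
      have := h 1
      simpa using this
  · intro f
    rw [R.eval_eq, ← hk, RightCStarModule.inner_sub_right', hP, RightCStarModule.inner_op_smul_right, ← hK,
      ← mul_assoc, hKKi, one_mul, sub_self]
end

section
/- Let E_1 and E_2 be reproducing kernel Hilbert C*-modules over a C*-algebra A on a set S, with kernel elements k^1_s and k^2_s respectively, and let f : S → A be a left multiplier of E_1 into E_2, i.e. the pointwise product f·h lies in E_2 for every h ∈ E_1. Then the multiplication map M_f : E_1 → E_2, M_f(h) = f·h, is an adjointable operator, and its adjoint satisfies M_f*(k^2_s) = k^1_s · f(s)* for all s ∈ S. -/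
open scoped RightActions

variable {A : Type*} [CStarAlgebra A] [PartialOrder A] [StarOrderedRing A]
variable {S : Type*} [Nonempty S]
variable {E₁ : Type*} [NormedAddCommGroup E₁] [NormedSpace ℂ E₁] [SMul Aᵐᵒᵖ E₁]
  [RightCStarModule A E₁] [CompleteSpace E₁]
variable {E₂ : Type*} [NormedAddCommGroup E₂] [NormedSpace ℂ E₂] [SMul Aᵐᵒᵖ E₂]
  [RightCStarModule A E₂] [CompleteSpace E₂]

namespace RightCStarModule

variable {E : Type*} [NormedAddCommGroup E] [NormedSpace ℂ E] [SMul Aᵐᵒᵖ E]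
  [RightCStarModule A E]

lemma inner_add_left {x y z : E} : inner A (x + y) z = inner A x z + inner A y z := by
  rw [← star_inner z (x + y), inner_add_right, star_add, star_inner, star_inner]

lemma inner_op_smul_left {a : A} {x y : E} : inner A (x <• a) y = star a * inner A x y := by
  rw [← star_inner y, inner_op_smul_right, star_mul, star_inner]

lemma inner_smul_left_complex {z : ℂ} {x y : E} : inner A (z • x) y = star z • inner A x y := by
  rw [← star_inner y, inner_smul_right_complex, star_smul, star_inner]

lemma inner_sub_left {x y z : E} : inner A (x - y) z = inner A x z - inner A y z := by
  apply eq_sub_of_add_eq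
  rw [← inner_add_left, sub_add_cancel]

lemma inner_sub_right {x y z : E} : inner A x (y - z) = inner A x y - inner A x z := by
  apply eq_sub_of_add_eq
  rw [← inner_add_right, sub_add_cancel]

@[simp]
lemma inner_zero_left {x : E} : inner A (0 : E) x = 0 := by
  have h := inner_add_left (A := A) (x := (0 : E)) (y := (0 : E)) (z := x)
  rw [add_zero] at h
  simpa using h

@[simp]
lemma inner_zero_right {x : E} : inner A x (0 : E) = 0 := by
  have h := inner_add_right (A := A) (x := x) (y := (0 : E)) (z := (0 : E))
  rw [add_zero] at h
  simpa using h

lemma inner_smul_right_real {r : ℝ} {x y : E} : inner A x (r • y) = r • inner A x y := by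
  have h₁ : r • y = (r : ℂ) • y := by simp
  rw [h₁, inner_smul_right_complex]
  simp

lemma inner_smul_left_real {r : ℝ} {x y : E} : inner A (r • x) y = r • inner A x y := by
  have h₁ : r • x = (r : ℂ) • x := by simp
  rw [h₁, inner_smul_left_complex]
  simp

lemma norm_sq_eq {x : E} : ‖x‖ ^ 2 = ‖inner A x x‖ := by
  rw [norm_eq_sqrt_norm_inner_self (A := A) x, Real.sq_sqrt (norm_nonneg _)]

lemma inner_mul_inner_swap_le {x y : E} :
    inner A y x * inner A x y ≤ ‖x‖ ^ 2 • inner A y y := by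
  rcases eq_or_ne x 0 with h | h
  · simp [h]
  · have h₁ : ∀ (a : A),
        (0 : A) ≤ ‖x‖ ^ 2 • (a * star a) - ‖x‖ ^ 2 • (a * inner A x y)
                  - ‖x‖ ^ 2 • (inner A y x * star a) + ‖x‖ ^ 2 • (‖x‖ ^ 2 • inner A y y) :=
        fun a => by
      calc (0 : A) ≤ inner A (x <• star a - ‖x‖ ^ 2 • y) (x <• star a - ‖x‖ ^ 2 • y) := by
                      exact inner_self_nonneg
            _ = a * inner A x x * star a - ‖x‖ ^ 2 • (a * inner A x y)
                  - ‖x‖ ^ 2 • (inner A y x * star a) + ‖x‖ ^ 2 • (‖x‖ ^ 2 • inner A y y) := by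
                      simp only [inner_sub_right, inner_op_smul_right, inner_sub_left,
                        inner_op_smul_left, inner_smul_left_real, mul_sub, mul_smul_comm,
                        inner_smul_right_real, smul_sub, mul_assoc, star_star, sub_mul,
                        smul_mul_assoc]
                      abel
            _ ≤ ‖x‖ ^ 2 • (a * star a) - ‖x‖ ^ 2 • (a * inner A x y)
                  - ‖x‖ ^ 2 • (inner A y x * star a) + ‖x‖ ^ 2 • (‖x‖ ^ 2 • inner A y y) := by
                      gcongr
                      calc _ ≤ ‖inner A x x‖ • (a * star a) :=
                          CStarAlgebra.star_right_conjugate_le_norm_smul (hb := star_inner x x)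
                        _ = (√‖inner A x x‖) ^ 2 • (a * star a) := by
                          rw [Real.sq_sqrt]
                          positivity
                        _ = ‖x‖ ^ 2 • (a * star a) := by
                          rw [← norm_eq_sqrt_norm_inner_self x]
    specialize h₁ (inner A y x)
    simp only [star_inner, sub_self, zero_sub, le_neg_add_iff_add_le, add_zero] at h₁
    rwa [smul_le_smul_iff_of_pos_left (pow_pos (norm_pos_iff.mpr h) _)] at h₁

variable (E) in
lemma norm_inner_le {x y : E} : ‖inner A x y‖ ≤ ‖x‖ * ‖y‖ := by
  have := calc ‖inner A x y‖ ^ 2 = ‖inner A y x * inner A x y‖ := by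
                rw [← star_inner x y, CStarRing.norm_star_mul_self, pow_two]
    _ ≤ ‖‖x‖ ^ 2 • inner A y y‖ := by
                refine CStarAlgebra.norm_le_norm_of_nonneg_of_le ?_ inner_mul_inner_swap_le
                rw [← star_inner x y]
                exact star_mul_self_nonneg _
    _ = ‖x‖ ^ 2 * ‖inner A y y‖ := by simp [norm_smul]
    _ = ‖x‖ ^ 2 * ‖y‖ ^ 2 := by rw [← norm_sq_eq]
    _ = (‖x‖ * ‖y‖) ^ 2 := by simp only [mul_pow]
  refine (pow_le_pow_iff_left₀ (norm_nonneg _) ?_ (by simp)).mp this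
  exact mul_nonneg (norm_nonneg _) (norm_nonneg _)

/-- The inner product as a sesquilinear map. -/
def innerₛₗ : E →ₗ⋆[ℂ] E →ₗ[ℂ] A where
  toFun x := { toFun := fun y => inner A x y
               map_add' := fun _ _ => inner_add_right
               map_smul' := fun _ _ => inner_smul_right_complex }
  map_add' _ _ := by ext; exact inner_add_left
  map_smul' _ _ := by ext; exact inner_smul_left_complex

/-- The inner product as a continuous sesquilinear map. -/
noncomputable def innerSL : E →L⋆[ℂ] E →L[ℂ] A :=
  LinearMap.mkContinuous₂ (innerₛₗ : E →ₗ⋆[ℂ] E →ₗ[ℂ] A) 1 <| fun x y => by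
    rw [one_mul]
    exact norm_inner_le E

lemma innerSL_apply {x y : E} : innerSL x y = inner A x y := rfl

lemma continuous_inner : Continuous (fun x : E × E => inner A x.1 x.2) := by
  simp_rw [← innerSL_apply]
  fun_prop

end RightCStarModule

open Filter Topology

/-- Uniqueness of elements with given inner products against everything. -/
lemma inner_ext {w w' : E₁} (h : ∀ x : E₁, (inner A w x : A) = inner A w' x) : w = w' := by
  have h0 : (inner A (w - w') (w - w') : A) = 0 := by
    rw [RightCStarModule.inner_sub_left, h (w - w'), sub_self]
  rw [← sub_eq_zero]
  exact RightCStarModule.inner_self.mp h0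

/-- if `f : S → A` is a left multiplier of the reproducing kernel
Hilbert C*-module `E₁` into `E₂`, i.e. the multiplication operator `M : E₁ → E₂` realizes
`(M h)(s) = f(s) h(s)` pointwise, then `M` is adjointable, and `M* (k² s) = k¹ s <• f(s)*`
for all `s ∈ S`. -/
theorem multiplication_operator_adjointable
    (R₁ : RKHCM A S E₁) (R₂ : RKHCM A S E₂) (f : S → A)
    (M : E₁ → E₂) (hM : ∀ (h : E₁) (s : S), R₂.toFun (M h) s = f s * R₁.toFun h s) :
    ∃ M' : E₂ → E₁,
      (∀ (x : E₁) (y : E₂), (inner A (M' y) x : A) = inner A y (M x)) ∧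
      (∀ s : S, M' (R₂.k s) = R₁.k s <• star (f s)) := by
  classical
  -- M is additive
  have hMadd : ∀ x y : E₁, M (x + y) = M x + M y := by
    intro x y
    apply R₂.injective
    funext s
    rw [hM, R₂.eval_eq (M x + M y), RightCStarModule.inner_add_right, ← R₂.eval_eq, ← R₂.eval_eq, hM, hM,
      R₁.eval_eq, RightCStarModule.inner_add_right, ← R₁.eval_eq, ← R₁.eval_eq, mul_add]
  -- M is ℂ-homogeneous
  have hMsmul : ∀ (c : ℂ) (x : E₁), M (c • x) = c • M x := by
    intro c x
    apply R₂.injective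
    funext s
    rw [hM, R₂.eval_eq (c • M x), RightCStarModule.inner_smul_right_complex, ← R₂.eval_eq, hM,
      R₁.eval_eq, RightCStarModule.inner_smul_right_complex, ← R₁.eval_eq, mul_smul_comm]
  let Mₗ : E₁ →ₗ[ℂ] E₂ :=
    { toFun := M, map_add' := hMadd, map_smul' := hMsmul }
  -- M is continuous by the closed graph theorem
  have hMcont : Continuous M := by
    apply Mₗ.continuous_of_seq_closed_graph
    intro u x y hu hy
    apply R₂.injective
    funext s
    have h1 : Tendsto (fun n => R₂.toFun (M (u n)) s) atTop (𝓝 (R₂.toFun y s)) := by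
      simp only [R₂.eval_eq]
      exact ((RightCStarModule.innerSL (R₂.k s)).continuous.tendsto y).comp hy
    have h2 : Tendsto (fun n => R₂.toFun (M (u n)) s) atTop (𝓝 (R₂.toFun (M x) s)) := by
      simp only [hM, R₁.eval_eq]
      exact (((continuous_mul_left (f s)).tendsto _).comp
        ((RightCStarModule.innerSL (R₁.k s)).continuous.tendsto x)).comp hu
    exact tendsto_nhds_unique h1 h2
  -- a norm bound for M
  obtain ⟨C, hC0, hC⟩ : ∃ C : ℝ, 0 ≤ C ∧ ∀ z : E₁, ‖M z‖ ≤ C * ‖z‖ := by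
    let Mc : E₁ →L[ℂ] E₂ := ⟨Mₗ, hMcont⟩
    exact ⟨‖Mc‖, norm_nonneg _, fun z => Mc.le_opNorm z⟩
  -- the set of y admitting an "adjoint value"
  set D : Set E₂ := {y | ∃ w : E₁, ∀ x : E₁, (inner A w x : A) = inner A y (M x)} with hD
  -- key norm estimate: if w is an adjoint value for y, then ‖w‖ ≤ C * ‖y‖
  have hbound : ∀ (y : E₂) (w : E₁), (∀ x : E₁, (inner A w x : A) = inner A y (M x)) →
      ‖w‖ ≤ C * ‖y‖ := by
    intro y w hw
    by_cases hw0 : ‖w‖ = 0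
    · rw [hw0]; positivity
    · have hsq : ‖w‖ ^ 2 ≤ (C * ‖y‖) * ‖w‖ := by
        calc ‖w‖ ^ 2 = ‖(inner A w w : A)‖ := RightCStarModule.norm_sq_eq
          _ = ‖(inner A y (M w) : A)‖ := by rw [hw w]
          _ ≤ ‖y‖ * ‖M w‖ := RightCStarModule.norm_inner_le E₂
          _ ≤ ‖y‖ * (C * ‖w‖) := by
              have := hC w
              have hy0 : (0:ℝ) ≤ ‖y‖ := norm_nonneg _
              nlinarith
          _ = (C * ‖y‖) * ‖w‖ := by ring
      have hwpos : (0:ℝ) < ‖w‖ := lt_of_le_of_ne (norm_nonneg _) (Ne.symm hw0)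
      nlinarith
  -- D is sequentially closed, hence closed
  have hDclosed : IsClosed D := by
    apply IsSeqClosed.isClosed
    intro yn y hyn hlim
    choose wn hwn using hyn
    -- wn is Cauchy
    have hwc : CauchySeq wn := by
      have hyc : CauchySeq yn := hlim.cauchySeq
      rw [Metric.cauchySeq_iff] at hyc ⊢
      intro ε hε
      obtain ⟨N, hN⟩ := hyc (ε / (C + 1)) (by positivity)
      refine ⟨N, fun m hm n hn => ?_⟩
      have key : ∀ x : E₁, (inner A (wn m - wn n) x : A) = inner A (yn m - yn n) (M x) := by
        intro x
        rw [RightCStarModule.inner_sub_left, RightCStarModule.inner_sub_left, hwn m x, hwn n x]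
      have h1 : ‖wn m - wn n‖ ≤ C * ‖yn m - yn n‖ := hbound _ _ key
      have h2 : ‖yn m - yn n‖ < ε / (C + 1) := by
        have := hN m hm n hn
        rwa [dist_eq_norm] at this
      rw [dist_eq_norm]
      calc ‖wn m - wn n‖ ≤ C * ‖yn m - yn n‖ := h1
        _ ≤ (C + 1) * ‖yn m - yn n‖ := by nlinarith [norm_nonneg (yn m - yn n)]
        _ < (C + 1) * (ε / (C + 1)) := by
            have : (0:ℝ) < C + 1 := by linarith
            exact (mul_lt_mul_iff_right₀ this).mpr h2
        _ = ε := by field_simp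
    obtain ⟨w, hw⟩ := cauchySeq_tendsto_of_complete hwc
    refine ⟨w, fun x => ?_⟩
    have h1 : Tendsto (fun n => (inner A (wn n) x : A)) atTop (𝓝 (inner A w x)) :=
      (RightCStarModule.continuous_inner.tendsto (w, x)).comp (hw.prodMk_nhds tendsto_const_nhds)
    have h2 : Tendsto (fun n => (inner A (wn n) x : A)) atTop (𝓝 (inner A y (M x))) := by
      simp only [fun n => hwn n x]
      exact (RightCStarModule.continuous_inner.tendsto (y, M x)).comp (hlim.prodMk_nhds tendsto_const_nhds)
    exact tendsto_nhds_unique h1 h2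
  -- D contains the generating set
  have hgen : (Set.range fun p : S × A => R₂.k p.1 <• p.2) ⊆ D := by
    rintro _ ⟨⟨s, a⟩, rfl⟩
    refine ⟨R₁.k s <• (star (f s) * a), fun x => ?_⟩
    rw [RightCStarModule.inner_op_smul_left, RightCStarModule.inner_op_smul_left]
    rw [star_mul, star_star]
    rw [← R₁.eval_eq, ← R₂.eval_eq, hM, mul_assoc]
  -- D contains the span, since it is a submodule-like set
  have hspan : ((Submodule.span ℂ (Set.range fun p : S × A => R₂.k p.1 <• p.2) :
      Submodule ℂ E₂) : Set E₂) ⊆ D := by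
    intro y hy
    induction hy using Submodule.span_induction with
    | mem z hz => exact hgen hz
    | zero => exact ⟨0, fun x => by simp⟩
    | add y z _ _ hy hz =>
        obtain ⟨w₁, h₁⟩ := hy
        obtain ⟨w₂, h₂⟩ := hz
        exact ⟨w₁ + w₂, fun x => by rw [RightCStarModule.inner_add_left, RightCStarModule.inner_add_left, h₁, h₂]⟩
    | smul c y _ hy =>
        obtain ⟨w, h⟩ := hy
        exact ⟨c • w, fun x => by
          rw [RightCStarModule.inner_smul_left_complex, RightCStarModule.inner_smul_left_complex, h]⟩
  -- hence D is everything
  have hall : ∀ y : E₂, y ∈ D := by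
    intro y
    have : y ∈ closure ((Submodule.span ℂ
        (Set.range fun p : S × A => R₂.k p.1 <• p.2) : Submodule ℂ E₂) : Set E₂) :=
      R₂.dense_span y
    exact hDclosed.closure_subset_iff.mpr hspan this
  refine ⟨fun y => Classical.choose (hall y), fun x y => Classical.choose_spec (hall y) x, ?_⟩
  intro s
  apply inner_ext (A := A)
  intro x
  rw [Classical.choose_spec (hall (R₂.k s)) x, RightCStarModule.inner_op_smul_left, star_star,
    ← R₁.eval_eq, ← R₂.eval_eq, hM]
end
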